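/- Let G act transitively on (M, μ) by dilations with character λ, and let K ∈ L(M×M, μ⊗μ) be the kernel of the integral operator Kf(x) = ∫ K(x,y) f(y) dμ(y) with domain D ⊆ L(M,μ). Suppose D is L_g-invariant and satisfies the separation property: there is a sequence (f_k) ⊆ D such that any F ∈ L(M,μ) with ∫ F f_k dμ = 0 for all k is zero a.e. Then the operator K is homogeneous (commutes with all L_g on D) if and only if for every g ∈ G, K(gx, gy) = λ_g⁻¹ K(x,y) for μ⊗μ-almost every (x,y). -/

import Mathlib

open MeasureTheory
open scoped ENNReal NNReal

/-- Characterization of homogeneous integral operators: with a transitive group of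
dilations (`μ(g·A) = λ_g μ(A)`, encoded as `μ.map (g⁻¹ • ·) = λ_g • μ`), an
integral operator `Kf(x) = ∫ K(x,y) f(y) dμ(y)` on an `L_g`-invariant domain `D`
satisfying the separation property commutes with all translations `L_g`
(i.e. is homogeneous) if and only if its kernel is weakly homogeneous:
for every `g ∈ G`, `K(gx, gy) = λ_g⁻¹ K(x,y)` for `μ⊗μ`-a.e. `(x,y)`. -/
theorem homogeneous_integral_operator_iff_weakly_homogeneous_kernel
    {M : Type*} [MeasurableSpace M] {G : Type*} [Group G] [MulAction G M]
    (μ : Measure M) [SigmaFinite μ]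
    (hmeas : ∀ g : G, Measurable fun x : M => g • x)
    (htrans : ∀ x y : M, ∃ g : G, g • x = y)
    (lam : G → ℝ≥0) (hlam : ∀ g, 0 < lam g)
    (hdil : ∀ g : G, μ.map (fun x : M => g⁻¹ • x) = (lam g : ℝ≥0∞) • μ)
    (K : M → M → ℝ) (hK : Measurable fun q : M × M => K q.1 q.2)
    (D : Set (M → ℝ))
    (hD : ∀ (g : G), ∀ f ∈ D, (fun x => f (g⁻¹ • x)) ∈ D)
    (hdef : ∀ f ∈ D, ∀ᵐ x ∂μ, Integrable (fun y => K x y * f y) μ)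
    (fk : ℕ → M → ℝ) (hfk : ∀ k, fk k ∈ D)
    (hsep : ∀ F : M → ℝ, (∀ k, ∫ x, F x * fk k x ∂μ = 0) → F =ᵐ[μ] 0) :
    (∀ (g : G), ∀ f ∈ D,
        (fun x => ∫ y, K (g⁻¹ • x) y * f y ∂μ)
          =ᵐ[μ] fun x => ∫ y, K x y * f (g⁻¹ • y) ∂μ)
      ↔ ∀ g : G, ∀ᵐ q ∂(μ.prod μ),
          K (g • q.1) (g • q.2) = ((lam g : ℝ))⁻¹ * K q.1 q.2 := by
  have hlam0 : ∀ g : G, ((lam g : ℝ)) ≠ 0 := fun g => ne_of_gt (by exact_mod_cast hlam g)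
  have hlamE0 : ∀ g : G, ((lam g : ℝ≥0∞)) ≠ 0 := fun g => by
    simpa using (hlam g).ne'
  -- the measure of the action of `g` (not `g⁻¹`)
  have hmapg : ∀ g : G, μ.map (fun x : M => g • x) = ((lam g⁻¹ : ℝ≥0) : ℝ≥0∞) • μ := by
    intro g
    have := hdil g⁻¹
    simpa [inv_inv] using this
  -- each action map is quasi measure preserving
  have qmp : ∀ g : G, Measure.QuasiMeasurePreserving (fun x : M => g • x) μ μ := by
    intro g
    refine ⟨hmeas g, ?_⟩
    rw [hmapg g]
    exact Measure.smul_absolutelyContinuous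
  -- acting on the first coordinate is quasi measure preserving on the product
  have measP : ∀ g : G, Measurable (fun q : M × M => (g • q.1, q.2)) :=
    fun g => ((hmeas g).comp measurable_fst).prodMk measurable_snd
  have qmpP : ∀ g : G, Measure.QuasiMeasurePreserving
      (fun q : M × M => (g • q.1, q.2)) (μ.prod μ) (μ.prod μ) := by
    intro g
    refine ⟨measP g, ?_⟩
    have hmapP : (μ.prod μ).map (fun q : M × M => (g • q.1, q.2))
        = (μ.map (fun x : M => g • x)).prod μ := by
      have := Measure.map_prod_map (δ := M) μ μ (hmeas g) measurable_id
      simp only [Measure.map_id] at this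
      rw [this]
      rfl
    rw [hmapP, hmapg g]
    exact Measure.AbsolutelyContinuous.prod Measure.smul_absolutelyContinuous
      Measure.AbsolutelyContinuous.rfl
  -- change of variables formula
  have hCoV : ∀ (g : G) (h : M → ℝ), AEStronglyMeasurable h μ →
      ∫ y, h (g⁻¹ • y) ∂μ = (lam g : ℝ) * ∫ y, h y ∂μ := by
    intro g h hh
    have h1 : AEStronglyMeasurable h (μ.map (fun x : M => g⁻¹ • x)) := by
      rw [hdil g]
      exact ⟨hh.mk h, hh.stronglyMeasurable_mk,
        Measure.ae_smul_measure hh.ae_eq_mk _⟩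
    rw [← integral_map (hmeas g⁻¹).aemeasurable h1, hdil g, integral_smul_measure]
    simp [smul_eq_mul]
  -- composing an integrable function with the action of `g` preserves integrability
  have hcomp : ∀ (g : G) (x : M) (f : M → ℝ),
      Integrable (fun y => K x y * f (g⁻¹ • y)) μ →
      Integrable (fun y => K x (g • y) * f y) μ := by
    intro g x f hx
    have h2 : Integrable (fun y => K x y * f (g⁻¹ • y)) (μ.map (fun z : M => g • z)) := by
      rw [hmapg g]
      exact hx.smul_measure ENNReal.coe_ne_top
    have h3 := (integrable_map_measure h2.1 (hmeas g).aemeasurable).1 h2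
    simpa [Function.comp_def, inv_smul_smul] using h3
  -- main change-of-variables identity for the right-hand side of the operator identity
  have hRHS : ∀ (g : G) (x : M) (f : M → ℝ),
      Integrable (fun y => K x y * f (g⁻¹ • y)) μ →
      ∫ y, K x y * f (g⁻¹ • y) ∂μ = (lam g : ℝ) * ∫ y, K x (g • y) * f y ∂μ := by
    intro g x f hx
    have h4 : Integrable (fun y => K x (g • y) * f y) μ := hcomp g x f hx
    have := hCoV g (fun z => K x (g • z) * f z) h4.1
    simpa [smul_inv_smul] using this
  -- the key intermediate statement
  have keyiff : ∀ g : G,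
      (∀ᵐ q ∂(μ.prod μ), K (g⁻¹ • q.1) q.2 = (lam g : ℝ) * K q.1 (g • q.2)) ↔
      (∀ᵐ q ∂(μ.prod μ), K (g • q.1) (g • q.2) = ((lam g : ℝ))⁻¹ * K q.1 q.2) := by
    intro g
    constructor
    · intro h
      have h2 := (qmpP g).ae h
      filter_upwards [h2] with q hq
      simp only [inv_smul_smul] at hq
      field_simp [hlam0 g] at hq ⊢
      linarith [hq]
    · intro h
      have h2 := (qmpP g⁻¹).ae h
      filter_upwards [h2] with q hq
      simp only [smul_inv_smul] at hq
      field_simp [hlam0 g] at hq ⊢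
      linarith [hq]
  constructor
  · -- homogeneous operator implies weakly homogeneous kernel
    intro hop g
    rw [← keyiff g]
    -- first prove the a.e.-a.e. version
    have hxy : ∀ᵐ x ∂μ, ∀ᵐ y ∂μ, K (g⁻¹ • x) y = (lam g : ℝ) * K x (g • y) := by
      have hall : ∀ᵐ x ∂μ, ∀ k : ℕ,
          Integrable (fun y => K (g⁻¹ • x) y * fk k y) μ ∧
          Integrable (fun y => K x (g • y) * fk k y) μ ∧
          ∫ y, K (g⁻¹ • x) y * fk k y ∂μ
            = (lam g : ℝ) * ∫ y, K x (g • y) * fk k y ∂μ := by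
        rw [ae_all_iff]
        intro k
        have i1 : ∀ᵐ x ∂μ, Integrable (fun y => K (g⁻¹ • x) y * fk k y) μ :=
          (qmp g⁻¹).ae (hdef (fk k) (hfk k))
        have i2 : ∀ᵐ x ∂μ, Integrable (fun y => K x y * fk k (g⁻¹ • y)) μ :=
          hdef _ (hD g (fk k) (hfk k))
        have e1 := hop g (fk k) (hfk k)
        filter_upwards [i1, i2, e1] with x h1 h2 h3
        exact ⟨h1, hcomp g x (fk k) h2, by rw [h3]; exact hRHS g x (fk k) h2⟩
      filter_upwards [hall] with x hx
      have hzero : ∀ k, ∫ y,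
          (fun y => K (g⁻¹ • x) y - (lam g : ℝ) * K x (g • y)) y * fk k y ∂μ = 0 := by
        intro k
        obtain ⟨h1, h2, h3⟩ := hx k
        have heq : ∫ y, (K (g⁻¹ • x) y - (lam g : ℝ) * K x (g • y)) * fk k y ∂μ
            = ∫ y, K (g⁻¹ • x) y * fk k y ∂μ
              - (lam g : ℝ) * ∫ y, K x (g • y) * fk k y ∂μ := by
          rw [← integral_const_mul, ← integral_sub h1 (h2.const_mul _)]
          congr 1
          ext y
          ring
        simpa [heq, h3] using sub_self _
      have hz := hsep _ hzero
      filter_upwards [hz] with y hy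
      have : K (g⁻¹ • x) y - (lam g : ℝ) * K x (g • y) = 0 := hy
      linarith
    -- upgrade to the product measure using measurability of the kernel
    have hms : MeasurableSet
        {q : M × M | K (g⁻¹ • q.1) q.2 = (lam g : ℝ) * K q.1 (g • q.2)} := by
      apply measurableSet_eq_fun
      · exact hK.comp (((hmeas g⁻¹).comp measurable_fst).prodMk measurable_snd)
      · exact measurable_const.mul
          (hK.comp (measurable_fst.prodMk ((hmeas g).comp measurable_snd)))
    exact (Measure.ae_prod_iff_ae_ae hms).2 hxy
  · -- weakly homogeneous kernel implies homogeneous operator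
    intro hker g f hf
    have hP : ∀ᵐ q ∂(μ.prod μ), K (g⁻¹ • q.1) q.2 = (lam g : ℝ) * K q.1 (g • q.2) :=
      (keyiff g).2 (hker g)
    have hae := Measure.ae_ae_of_ae_prod hP
    have i2 : ∀ᵐ x ∂μ, Integrable (fun y => K x y * f (g⁻¹ • y)) μ :=
      hdef _ (hD g f hf)
    filter_upwards [hae, i2] with x hx h2
    calc ∫ y, K (g⁻¹ • x) y * f y ∂μ
        = ∫ y, ((lam g : ℝ) * K x (g • y)) * f y ∂μ := by
          apply integral_congr_ae
          filter_upwards [hx] with y hy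
          rw [hy]
      _ = (lam g : ℝ) * ∫ y, K x (g • y) * f y ∂μ := by
          rw [← integral_const_mul]
          congr 1
          ext y
          ring
      _ = ∫ y, K x y * f (g⁻¹ • y) ∂μ := (hRHS g x f h2).symm
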